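/- Let P > 0, N > 0 and g ≥ 0, and set a = √g and α* = (g + 1)·P / ((g + 1)·P + N). Then the effective noise variance N_eq(α*) = ((α*·√g − a)² + (α* − 1)²)·P + (α*)²·N equals P·(g + 1)·N / ((g + 1)·P + N), and consequently (1/2)·log₂( P / N_eq(α*) ) = (1/2)·log₂( 1/(g + 1) + P/N ). -/

import Mathlib

/-- With `a = √g` and `α* = (g+1)P/((g+1)P + N)`, the effective-noise variance
`N_eq(α*) = ((α*√g − a)² + (α* − 1)²)P + (α*)²N` equals `P(g+1)N/((g+1)P + N)`, and
consequently `(1/2) log₂ (P/N_eq(α*)) = (1/2) log₂ (1/(g+1) + P/N)`. -/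
theorem stmt_16 (P N g : ℝ) (hP : 0 < P) (hN : 0 < N) (hg : 0 ≤ g)
    (a αs Neqv : ℝ) (ha : a = Real.sqrt g)
    (hαs : αs = (g + 1) * P / ((g + 1) * P + N))
    (hNeqv : Neqv = ((αs * Real.sqrt g - a) ^ 2 + (αs - 1) ^ 2) * P + αs ^ 2 * N) :
    Neqv = P * (g + 1) * N / ((g + 1) * P + N) ∧
    (1 / 2) * Real.logb 2 (P / Neqv) =
      (1 / 2) * Real.logb 2 (1 / (g + 1) + P / N) := by
  have hg1 : (0:ℝ) < g + 1 := by linarith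
  have hD : (0:ℝ) < (g + 1) * P + N := by positivity
  have hsq : Real.sqrt g ^ 2 = g := Real.sq_sqrt hg
  have h1 : Neqv = P * (g + 1) * N / ((g + 1) * P + N) := by
    subst ha hαs hNeqv
    field_simp
    linear_combination (N^2) * hsq
  refine ⟨h1, ?_⟩
  have h2 : P / Neqv = 1 / (g + 1) + P / N := by
    rw [h1]
    field_simp
    ring
  rw [h2]
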